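/- Under synchronous majority dynamics on the infinite k-regular tree, if H is an alternating ⌈(k+1)/2⌉-core with respect to the configuration σ(T), then H is an alternating ⌈(k+1)/2⌉-core with respect to σ(T') for all T' > T. In particular, the even vertices of H at time T have spin −1 at all even times T + 2m and the odd vertices of H have spin −1 at all odd times T + 2m + 1. -/

import Mathlib

/-- One synchronous step of the majority process. -/
noncomputable def majStep {V : Type*} (G : SimpleGraph V) [G.LocallyFinite]
    (coin : V → Bool) (σ : V → ℤ) (i : V) : ℤ :=
  let s : ℤ := ∑ j ∈ G.neighborFinset i, σ j
  if 0 < s then 1 else if s < 0 then -1 else if coin i then σ i else -σ i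

/-- The trajectory of the synchronous majority process. -/
noncomputable def majTraj {V : Type*} (G : SimpleGraph V) [G.LocallyFinite]
    (coins : ℕ → V → Bool) (σ0 : V → ℤ) : ℕ → V → ℤ
  | 0 => σ0
  | t + 1 => majStep G (coins t) (majTraj G coins σ0 t)

/-- The number of neighbors of i lying in the set S. -/
noncomputable def nbrCount {V : Type*} (G : SimpleGraph V) (S : Set V) (i : V) : ℕ :=
  {j | G.Adj i j ∧ j ∈ S}.ncard

/-- `IsAltCore G r σ Sm Ss` : the induced subgraph on Sm ∪ Ss is an alternating r-core
with respect to σ: every vertex has at least r neighbors inside the core, all vertices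
of the even class Sm have spin −1, and the core is bipartite with classes (Sm, Ss). -/
def IsAltCore {V : Type*} (G : SimpleGraph V) (r : ℕ) (σ : V → ℤ)
    (Sm Ss : Set V) : Prop :=
  Disjoint Sm Ss ∧
  (∀ i ∈ Sm ∪ Ss, r ≤ nbrCount G (Sm ∪ Ss) i) ∧
  (∀ i ∈ Sm, σ i = -1) ∧
  (∀ i ∈ Sm, ∀ j, G.Adj i j → j ∈ Sm ∪ Ss → j ∈ Ss) ∧
  (∀ i ∈ Ss, ∀ j, G.Adj i j → j ∈ Sm ∪ Ss → j ∈ Sm)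

lemma majStep_pm {V : Type*} (G : SimpleGraph V) [G.LocallyFinite]
    (coin : V → Bool) (σ : V → ℤ) (hpm : ∀ i, σ i = 1 ∨ σ i = -1) (i : V) :
    majStep G coin σ i = 1 ∨ majStep G coin σ i = -1 := by
  unfold majStep
  rcases hpm i with h | h <;> simp [h] <;> split_ifs <;> simp_all

lemma core_step {V : Type*} (G : SimpleGraph V) [G.LocallyFinite]
    (k : ℕ) (hk : 3 ≤ k) (hreg : ∀ v, G.degree v = k)
    (σ : V → ℤ) (hpm : ∀ i, σ i = 1 ∨ σ i = -1)
    (A B : Set V) (h : IsAltCore G ((k + 2) / 2) σ A B) (coin : V → Bool) :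
    IsAltCore G ((k + 2) / 2) (majStep G coin σ) B A := by
  classical
  obtain ⟨hdisj, hcnt, hspin, hAB, hBA⟩ := h
  have key : ∀ i ∈ B, (∑ j ∈ G.neighborFinset i, σ j) < 0 := by
    intro i hi
    set N := G.neighborFinset i with hNdef
    set F := N.filter (fun j => j ∈ A) with hF
    have hFcard : (k + 2) / 2 ≤ F.card := by
      have hc := hcnt i (Or.inr hi)
      have hset : {j | G.Adj i j ∧ j ∈ A ∪ B} = ↑F := by
        ext j
        simp only [Set.mem_setOf_eq, hF, Finset.coe_filter, hNdef,
          SimpleGraph.mem_neighborFinset]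
        constructor
        · rintro ⟨hadj, hj⟩; exact ⟨hadj, hBA i hi j hadj hj⟩
        · rintro ⟨hadj, hj⟩; exact ⟨hadj, Or.inl hj⟩
      rw [nbrCount, hset, Set.ncard_coe_finset] at hc
      exact hc
    have hsub : F ⊆ N := Finset.filter_subset _ _
    have hNcard : N.card = k := hreg i
    have hsum1 : ∑ j ∈ F, σ j = -(F.card : ℤ) := by
      have : ∀ j ∈ F, σ j = -1 := by
        intro j hj
        exact hspin j (Finset.mem_filter.mp hj).2
      rw [Finset.sum_congr rfl this]
      simp
    have hsum2 : ∑ j ∈ N \ F, σ j ≤ ((N \ F).card : ℤ) := by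
      calc ∑ j ∈ N \ F, σ j ≤ ∑ _j ∈ N \ F, (1 : ℤ) := by
            apply Finset.sum_le_sum
            intro j _
            rcases hpm j with h | h <;> simp [h]
        _ = ((N \ F).card : ℤ) := by simp
    have hsplit : ∑ j ∈ N \ F, σ j + ∑ j ∈ F, σ j = ∑ j ∈ N, σ j :=
      Finset.sum_sdiff hsub
    have hcards : (N \ F).card = N.card - F.card := Finset.card_sdiff_of_subset hsub
    have hFle : F.card ≤ N.card := Finset.card_le_card hsub
    have hc : ((N \ F).card : ℤ) = (k : ℤ) - F.card := by
      rw [hcards, hNcard]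
      omega
    have : ∑ j ∈ N, σ j ≤ (k : ℤ) - 2 * F.card := by
      rw [← hsplit, hsum1]
      linarith [hsum2, hc]
    have h2 : 2 * F.card ≥ k + 1 := by omega
    have : ∑ j ∈ N, σ j ≤ -1 := by
      have : ((k : ℤ) + 1) ≤ 2 * F.card := by exact_mod_cast h2
      omega
    omega
  have hnew : ∀ i ∈ B, majStep G coin σ i = -1 := by
    intro i hi
    have hs := key i hi
    unfold majStep
    simp only []
    rw [if_neg (by omega), if_pos hs]
  refine ⟨hdisj.symm, ?_, hnew, ?_, ?_⟩
  · intro i hi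
    rw [Set.union_comm]
    exact hcnt i (by rwa [Set.union_comm])
  · intro i hi j hadj hj
    exact hBA i hi j hadj (by rwa [Set.union_comm] at hj)
  · intro i hi j hadj hj
    exact hAB i hi j hadj (by rwa [Set.union_comm] at hj)

/-- under majority dynamics on the k-regular tree, an alternating
⌈(k+1)/2⌉-core persists forever (with the two classes swapping roles at each step);
in particular the even vertices are −1 at all even times and the odd vertices are −1
at all odd times.  Here ⌈(k+1)/2⌉ = (k+2)/2 in natural division. -/
theorem alternating_core_persists
    {V : Type*} (G : SimpleGraph V) [G.LocallyFinite]
    (k : ℕ) (hk : 3 ≤ k) (hreg : ∀ v, G.degree v = k) (htree : G.IsTree)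
    (σ0 : V → ℤ) (hpm : ∀ i, σ0 i = 1 ∨ σ0 i = -1)
    (Sm Ss : Set V) (hcore : IsAltCore G ((k + 2) / 2) σ0 Sm Ss)
    (coins : ℕ → V → Bool) :
    (∀ t, IsAltCore G ((k + 2) / 2) (majTraj G coins σ0 t)
      (if t % 2 = 0 then Sm else Ss) (if t % 2 = 0 then Ss else Sm)) ∧
    (∀ m, (∀ i ∈ Sm, majTraj G coins σ0 (2 * m) i = -1) ∧
      (∀ i ∈ Ss, majTraj G coins σ0 (2 * m + 1) i = -1)) := by
  have main : ∀ t, IsAltCore G ((k + 2) / 2) (majTraj G coins σ0 t)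
      (if t % 2 = 0 then Sm else Ss) (if t % 2 = 0 then Ss else Sm) ∧
      (∀ i, majTraj G coins σ0 t i = 1 ∨ majTraj G coins σ0 t i = -1) := by
    intro t
    induction t with
    | zero => exact ⟨by simpa [majTraj] using hcore, hpm⟩
    | succ t ih =>
      obtain ⟨hc, hp⟩ := ih
      have heq : majTraj G coins σ0 (t + 1)
          = majStep G (coins t) (majTraj G coins σ0 t) := rfl
      refine ⟨?_, fun i => heq ▸ majStep_pm G (coins t) _ hp i⟩
      have hstep := core_step G k hk hreg _ hp _ _ hc (coins t)
      rcases Nat.mod_two_eq_zero_or_one t with h0 | h1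
      · have h1' : (t + 1) % 2 = 1 := by omega
        simp only [h0, if_pos rfl] at hstep
        simpa [h1', heq] using hstep
      · have h0' : (t + 1) % 2 = 0 := by omega
        simp only [h1, if_neg (by omega : ¬ t % 2 = 0)] at hstep
        simpa [h0', heq] using hstep
  refine ⟨fun t => (main t).1, fun m => ⟨?_, ?_⟩⟩
  · intro i hi
    have := (main (2 * m)).1
    rw [if_pos (by omega : 2 * m % 2 = 0)] at this
    exact this.2.2.1 i hi
  · intro i hi
    have := (main (2 * m + 1)).1
    rw [if_neg (by omega : ¬ (2 * m + 1) % 2 = 0)] at this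
    exact this.2.2.1 i hi
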